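/- Let A, B ∈ R^{N×N} be symmetric, and let P_A A denote the best rank-K approximation of A (the projection of A onto the span of its top K eigenvectors composed with A). Then for any matrix B of rank at most K, ‖P_A A − B‖_F² ≤ 8K‖A − B‖². -/

import Mathlib

open Matrix

noncomputable def specNorm {N : ℕ} (A : Matrix (Fin N) (Fin N) ℝ) : ℝ :=
  ‖Matrix.toEuclideanCLM (𝕜 := ℝ) A‖

noncomputable def frobNorm {N : ℕ} (A : Matrix (Fin N) (Fin N) ℝ) : ℝ :=
  Real.sqrt (∑ i, ∑ j, (A i j) ^ 2)

lemma specNorm_nonneg {N : ℕ} (A : Matrix (Fin N) (Fin N) ℝ) : 0 ≤ specNorm A :=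
  norm_nonneg _

lemma specNorm_triangle {N : ℕ} (X Y : Matrix (Fin N) (Fin N) ℝ) :
    specNorm (X + Y) ≤ specNorm X + specNorm Y := by
  simp only [specNorm, map_add]; exact norm_add_le _ _

lemma specNorm_neg {N : ℕ} (X : Matrix (Fin N) (Fin N) ℝ) : specNorm (-X) = specNorm X := by
  simp only [specNorm, map_neg, norm_neg]

lemma rank_add_le' {N : ℕ} (X Y : Matrix (Fin N) (Fin N) ℝ) :
    (X + Y).rank ≤ X.rank + Y.rank := by
  classical
  have h : LinearMap.range (X + Y).mulVecLin ≤
      LinearMap.range X.mulVecLin ⊔ LinearMap.range Y.mulVecLin := by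
    rintro _ ⟨v, rfl⟩
    rw [Matrix.mulVecLin_add, LinearMap.add_apply]
    exact Submodule.add_mem_sup ⟨v, rfl⟩ ⟨v, rfl⟩
  calc (X + Y).rank ≤ Module.finrank ℝ
        ↥(LinearMap.range X.mulVecLin ⊔ LinearMap.range Y.mulVecLin) :=
        Submodule.finrank_mono h
    _ ≤ X.rank + Y.rank := by
        have := Submodule.finrank_sup_add_finrank_inf_eq
          (LinearMap.range X.mulVecLin) (LinearMap.range Y.mulVecLin)
        simp only [Matrix.rank]
        omega

lemma rank_neg' {N : ℕ} (X : Matrix (Fin N) (Fin N) ℝ) : (-X).rank = X.rank := by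
  unfold Matrix.rank
  have h : (-X).mulVecLin = -X.mulVecLin := by
    ext v
    simp [Matrix.mulVecLin_apply, Matrix.neg_mulVec]
  rw [h, LinearMap.range_neg]

/-- Frobenius norm squared bounded by rank times spectral norm squared. -/
lemma frob_sq_le_rank_mul_spec_sq {N : ℕ} (hN : N ≠ 0) (M : Matrix (Fin N) (Fin N) ℝ) :
    frobNorm M ^ 2 ≤ M.rank * specNorm M ^ 2 := by
  classical
  haveI : Nonempty (Fin N) := Fin.pos_iff_nonempty.mp (Nat.pos_of_ne_zero hN)
  set H : Matrix (Fin N) (Fin N) ℝ := Mᴴ * M with hHdef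
  have hH : H.IsHermitian := Matrix.isHermitian_conjTranspose_mul_self M
  have hfrob : frobNorm M ^ 2 = H.trace := by
    rw [frobNorm, Real.sq_sqrt (by positivity)]
    simp only [hHdef, Matrix.trace, Matrix.diag, Matrix.mul_apply, Matrix.conjTranspose_apply,
      star_trivial]
    rw [Finset.sum_comm]
    exact Finset.sum_congr rfl fun j _ => Finset.sum_congr rfl fun i _ => pow_two _
  have htrace : H.trace = ∑ i, hH.eigenvalues i := by
    conv_lhs => rw [hH.spectral_theorem, Unitary.conjStarAlgAut_apply]
    rw [Matrix.trace_mul_cycle]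
    rw [show (star (hH.eigenvectorUnitary : Matrix (Fin N) (Fin N) ℝ)) *
      (hH.eigenvectorUnitary : Matrix (Fin N) (Fin N) ℝ) = 1 from Unitary.coe_star_mul_self _]
    simp [Matrix.trace_diagonal]
  -- each eigenvalue is at most specNorm M ^ 2
  have hbound : ∀ i, hH.eigenvalues i ≤ specNorm M ^ 2 := by
    intro i
    have hmem : hH.eigenvalues i ∈ spectrum ℝ H := hH.eigenvalues_mem_spectrum_real i
    have hmem2 : hH.eigenvalues i ∈ spectrum ℝ (Matrix.toEuclideanCLM (𝕜 := ℝ) H) := by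
      rwa [AlgEquiv.spectrum_eq (Matrix.toEuclideanCLM (𝕜 := ℝ)) H]
    have hnorm : ‖hH.eigenvalues i‖ ≤ ‖Matrix.toEuclideanCLM (𝕜 := ℝ) H‖ :=
      spectrum.norm_le_norm_of_mem hmem2
    have hHn : ‖Matrix.toEuclideanCLM (𝕜 := ℝ) H‖ = specNorm M ^ 2 := by
      open scoped Matrix.Norms.L2Operator in
      rw [← Matrix.cstar_norm_def, hHdef, Matrix.l2_opNorm_conjTranspose_mul_self,
        specNorm, ← Matrix.cstar_norm_def, sq]
    calc hH.eigenvalues i ≤ ‖hH.eigenvalues i‖ := le_abs_self _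
      _ ≤ ‖Matrix.toEuclideanCLM (𝕜 := ℝ) H‖ := hnorm
      _ = specNorm M ^ 2 := hHn
  have hnn : ∀ i, 0 ≤ hH.eigenvalues i := by
    intro i
    exact (Matrix.PosSemidef.eigenvalues_nonneg (Matrix.posSemidef_conjTranspose_mul_self M) i)
  -- rank of M equals rank of H
  have hrankH : H.rank = M.rank := Matrix.rank_conjTranspose_mul_self M
  have hsum : ∑ i, hH.eigenvalues i ≤ M.rank * specNorm M ^ 2 := by
    have h1 : ∑ i, hH.eigenvalues i
        = ∑ i ∈ Finset.univ.filter (fun i => hH.eigenvalues i ≠ 0), hH.eigenvalues i :=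
      (Finset.sum_filter_ne_zero _).symm
    have hcard : (Finset.univ.filter (fun i => hH.eigenvalues i ≠ 0)).card = M.rank := by
      rw [← hrankH, hH.rank_eq_card_non_zero_eigs, Fintype.card_subtype]
    rw [h1, ← hcard]
    calc ∑ i ∈ Finset.univ.filter (fun i => hH.eigenvalues i ≠ 0), hH.eigenvalues i
        ≤ (Finset.univ.filter (fun i => hH.eigenvalues i ≠ 0)).card • (specNorm M ^ 2) :=
          Finset.sum_le_card_nsmul _ _ _ (fun i _ => hbound i)
      _ = _ := by rw [nsmul_eq_mul]
  rw [hfrob, htrace]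
  exact hsum

theorem best_rank_K_approximation_frobenius_bound
    (N K : ℕ) (A Ahat B : Matrix (Fin N) (Fin N) ℝ)
    (hA : A.IsHermitian)
    (hrank : Ahat.rank ≤ K)
    (hopt : ∀ X : Matrix (Fin N) (Fin N) ℝ, X.rank ≤ K →
      specNorm (A - Ahat) ≤ specNorm (A - X))
    (hB : B.rank ≤ K) :
    frobNorm (Ahat - B) ^ 2 ≤ 8 * K * specNorm (A - B) ^ 2 := by
  by_cases hN : N = 0
  · subst hN
    have : frobNorm (Ahat - B) = 0 := by simp [frobNorm]
    rw [this, zero_pow (by norm_num)]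
    positivity
  · have hr : (Ahat - B).rank ≤ 2 * K := by
      rw [sub_eq_add_neg]
      calc (Ahat + -B).rank ≤ Ahat.rank + (-B).rank := rank_add_le' _ _
        _ = Ahat.rank + B.rank := by rw [rank_neg']
        _ ≤ 2 * K := by omega
    have hs : specNorm (Ahat - B) ≤ 2 * specNorm (A - B) := by
      have heq : Ahat - B = (A - B) + -(A - Ahat) := by abel
      calc specNorm (Ahat - B) = specNorm ((A - B) + -(A - Ahat)) := by rw [← heq]
        _ ≤ specNorm (A - B) + specNorm (-(A - Ahat)) := specNorm_triangle _ _
        _ = specNorm (A - B) + specNorm (A - Ahat) := by rw [specNorm_neg]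
        _ ≤ specNorm (A - B) + specNorm (A - B) := by linarith [hopt B hB]
        _ = 2 * specNorm (A - B) := by ring
    have h1 := frob_sq_le_rank_mul_spec_sq hN (Ahat - B)
    have h2 : specNorm (Ahat - B) ^ 2 ≤ 4 * specNorm (A - B) ^ 2 := by
      nlinarith [specNorm_nonneg (Ahat - B), specNorm_nonneg (A - B)]
    have h3 : ((Ahat - B).rank : ℝ) ≤ 2 * K := by exact_mod_cast hr
    nlinarith [specNorm_nonneg (Ahat - B), sq_nonneg (specNorm (Ahat - B)),
      Nat.cast_nonneg (α := ℝ) (Ahat - B).rank, specNorm_nonneg (A - B),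
      sq_nonneg (specNorm (A - B))]
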